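/- Let K ⊆ ℝ^q be a nonempty compact set and C ⊆ ℝ^q a closed convex cone. Then the recession cone of K + C equals C: recc(K + C) = C, where recc A := {k ∈ ℝ^q : a + λk ∈ A for all a ∈ A and all λ ≥ 0}. -/

import Mathlib

open Set Pointwise

noncomputable section

/-- Recession cone of a set. -/
def recC {q : ℕ} (A : Set (Fin q → ℝ)) : Set (Fin q → ℝ) :=
  {k | ∀ a ∈ A, ∀ t : ℝ, 0 ≤ t → a + t • k ∈ A}

/-- for a nonempty compact set `K` and a closed convex cone `C`,
`recc (K + C) = C`. -/
theorem stmt9 {q : ℕ} (K C : Set (Fin q → ℝ))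
    (hK : IsCompact K) (hKne : K.Nonempty)
    (hCclosed : IsClosed C) (hCconv : Convex ℝ C)
    (hCcone : ∀ t : ℝ, 0 ≤ t → ∀ y ∈ C, t • y ∈ C)
    (hC0 : (0 : Fin q → ℝ) ∈ C) :
    recC (K + C) = C := by
  have hCadd : ∀ c ∈ C, ∀ d ∈ C, c + d ∈ C := by
    intro c hc d hd
    have h := hCconv hc hd (by norm_num : (0:ℝ) ≤ 1/2) (by norm_num : (0:ℝ) ≤ 1/2)
      (by norm_num)
    have h2 : (2:ℝ) • ((1/2:ℝ) • c + (1/2:ℝ) • d) ∈ C :=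
      hCcone 2 (by norm_num) _ h
    have : (2:ℝ) • ((1/2:ℝ) • c + (1/2:ℝ) • d) = c + d := by
      rw [smul_add, smul_smul, smul_smul]; norm_num
    rwa [this] at h2
  ext k
  constructor
  · intro hk
    obtain ⟨x₀, hx₀⟩ := hKne
    have hmem : ∀ n : ℕ, x₀ + (n : ℝ) • k ∈ K + C := by
      intro n
      have h0 : x₀ ∈ K + C := by
        have := Set.add_mem_add hx₀ hC0
        simpa using this
      exact hk x₀ h0 n (Nat.cast_nonneg n)
    choose x hx c hc heq using fun n => hmem n
    obtain ⟨R, hR⟩ := hK.isBounded.exists_norm_le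
    set d : ℕ → (Fin q → ℝ) := fun n => ((n : ℝ) + 1)⁻¹ • c (n + 1) with hd
    have hdC : ∀ n, d n ∈ C := fun n =>
      hCcone _ (inv_nonneg.2 (by positivity)) _ (hc (n + 1))
    have hcval : ∀ n : ℕ, c (n + 1) = (x₀ - x (n + 1)) + ((n : ℝ) + 1) • k := by
      intro n
      have h : x (n + 1) + c (n + 1) = x₀ + ((n + 1 : ℕ) : ℝ) • k := heq (n + 1)
      have : c (n + 1) = x₀ + ((n + 1 : ℕ) : ℝ) • k - x (n + 1) := by
        rw [← h]; abel
      rw [this]; push_cast; abel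
    have hdval : ∀ n : ℕ, d n = ((n : ℝ) + 1)⁻¹ • (x₀ - x (n + 1)) + k := by
      intro n
      have hne : ((n : ℝ) + 1) ≠ 0 := by positivity
      rw [hd]
      simp only [hcval n, smul_add, smul_smul, inv_mul_cancel₀ hne, one_smul]
    have htend : Filter.Tendsto d Filter.atTop (nhds k) := by
      have h0 : Filter.Tendsto (fun n : ℕ => ((n : ℝ) + 1)⁻¹ • (x₀ - x (n + 1)))
          Filter.atTop (nhds 0) := by
        refine squeeze_zero_norm (a := fun n : ℕ => ((n : ℝ) + 1)⁻¹ * (2 * R)) ?_ ?_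
        · intro n
          rw [norm_smul, norm_inv, Real.norm_eq_abs,
            abs_of_nonneg (by positivity : (0:ℝ) ≤ (n:ℝ) + 1)]
          have hb : ‖x₀ - x (n + 1)‖ ≤ 2 * R :=
            calc ‖x₀ - x (n + 1)‖ ≤ ‖x₀‖ + ‖x (n + 1)‖ := norm_sub_le _ _
              _ ≤ R + R := add_le_add (hR x₀ hx₀) (hR _ (hx (n + 1)))
              _ = 2 * R := by ring
          exact mul_le_mul_of_nonneg_left hb (by positivity)
        · have := tendsto_one_div_add_atTop_nhds_zero_nat (𝕜 := ℝ)
          have h := this.mul_const (2 * R)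
          simpa [one_div] using h
      have : Filter.Tendsto (fun n : ℕ =>
          ((n : ℝ) + 1)⁻¹ • (x₀ - x (n + 1)) + k) Filter.atTop (nhds (0 + k)) :=
        h0.add tendsto_const_nhds
      rw [zero_add] at this
      exact this.congr fun n => (hdval n).symm
    exact hCclosed.mem_of_tendsto htend (Filter.Eventually.of_forall hdC)
  · intro hk a ha t ht
    obtain ⟨x, hx, c, hc, rfl⟩ := ha
    have : x + c + t • k = x + (c + t • k) := by abel
    rw [this]
    exact Set.add_mem_add hx (hCadd c hc _ (hCcone t ht k hk))
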